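/- If the proponent has an admissible winning strategy σ in the dispute tree induced by argument a, then the set of arguments played by the proponent in the subtree T_σ is an admissible set containing a. -/

import Mathlib

def conflictFree {α : Type*} (att : α → α → Prop) (E : Set α) : Prop :=
  ∀ a ∈ E, ∀ b ∈ E, ¬ att a b

def acceptable {α : Type*} (att : α → α → Prop) (E : Set α) (a : α) : Prop :=
  ∀ b, att b a → ∃ c ∈ E, att c b

def admissible {α : Type*} (att : α → α → Prop) (E : Set α) : Prop :=
  conflictFree att E ∧ ∀ a ∈ E, acceptable att E a

/-- The arguments labelling proponent nodes of the subtree `T_σ` of the dispute tree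
induced by `a`, for a strategy `σ` of the proponent: the root `a` is played by the
proponent, the opponent plays every attacker `b` of a proponent argument, and the
proponent answers `b` with `σ b` (when defined). -/
inductive proPlayed {α : Type*} (att : α → α → Prop) (σ : α → Option α) (a : α) : α → Prop
  | root : proPlayed att σ a a
  | step {p b c : α} : proPlayed att σ a p → att b p → σ b = some c → proPlayed att σ a c

/-- The arguments labelling opponent nodes of `T_σ`: the attackers of the arguments
played by the proponent. -/
def oppPlayed {α : Type*} (att : α → α → Prop) (σ : α → Option α) (a : α) (b : α) : Prop :=
  ∃ p, proPlayed att σ a p ∧ att b p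

/-- `σ` is an admissible winning strategy in the dispute tree induced by `a`:
every opponent node of `T_σ` has exactly one child (the proponent answers every
opponent argument), and no argument labels both a proponent node and an opponent
node of `T_σ`. -/
def admissibleWinning {α : Type*} (att : α → α → Prop) (σ : α → Option α) (a : α) : Prop :=
  (∀ b, oppPlayed att σ a b → ∃ c, σ b = some c) ∧
  (∀ x, proPlayed att σ a x → ¬ oppPlayed att σ a x)

/-- If the proponent has an admissible winning strategy `σ` in the dispute tree
induced by `a`, then the set of arguments played by the proponent in `T_σ` is an
admissible set containing `a`. -/
theorem admissibleWinning_proSet_admissible {α : Type*} (att : α → α → Prop)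
    (σ : α → Option α) (a : α)
    (hσ : ∀ x y, σ x = some y → att y x)
    (hwin : admissibleWinning att σ a) :
    admissible att {x | proPlayed att σ a x} ∧ a ∈ {x | proPlayed att σ a x} := by
  refine ⟨⟨?_, ?_⟩, proPlayed.root⟩
  · intro p hp q hq hatt
    exact hwin.2 p hp ⟨q, hq, hatt⟩
  · intro p hp b hb
    obtain ⟨c, hc⟩ := hwin.1 b ⟨p, hp, hb⟩
    exact ⟨c, proPlayed.step hp hb hc, hσ b c hc⟩
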